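/- arXiv:2201.05588 — 3 statements merged into one kernel-verified Lean document; each statement's English description precedes it below -/
import Mathlib

section
/- Let N be a nonredundant workflow net. Then N is generalised sound (k-sound for all k ≥ 1) if and only if N is strongly k-sound for all k ≥ 0. Moreover, if N is not strongly k-sound, then there exists k' ≤ k + (‖T‖+2)^{|T|} · max(‖T‖,k) · |P|(|P|+2) such that N is not k'-sound. -/
set_option linter.unusedSectionVars false
set_option maxHeartbeats 1000000


/-- A Petri net over places `P` and transitions `T`, given by pre/post arc weights. -/
structure PetriNet (P T : Type) where
  pre : T → P → ℕ
  post : T → P → ℕ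

namespace PetriNet

variable {P T : Type}

/-- Transition `t` is enabled in marking `m`. -/
def Enabled (N : PetriNet P T) (m : P → ℕ) (t : T) : Prop := ∀ p, N.pre t p ≤ m p

/-- Firing transition `t` in `m` yields `m'`. -/
def Fire (N : PetriNet P T) (m : P → ℕ) (t : T) (m' : P → ℕ) : Prop :=
  N.Enabled m t ∧ ∀ p, m' p = m p - N.pre t p + N.post t p

def Step (N : PetriNet P T) (m m' : P → ℕ) : Prop := ∃ t, N.Fire m t m'

/-- Reachability `m →* m'`. -/
def Reach (N : PetriNet P T) : (P → ℕ) → (P → ℕ) → Prop := Relation.ReflTransGen N.Step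

/-- Effect of a transition, as an integer vector. -/
def eff (N : PetriNet P T) (t : T) (p : P) : ℤ := (N.post t p : ℤ) - (N.pre t p : ℤ)

def ZStep (N : PetriNet P T) (m m' : P → ℤ) : Prop := ∃ t, ∀ p, m' p = m p + N.eff t p

/-- Z-reachability: no enabledness constraint, markings range over ℤ. -/
def ZReach (N : PetriNet P T) : (P → ℤ) → (P → ℤ) → Prop := Relation.ReflTransGen N.ZStep

/-- Maximal arc weight `‖T‖`. -/
def maxW (N : PetriNet P T) [Fintype P] [Fintype T] : ℕ :=
  Finset.univ.sup fun t => Finset.univ.sup fun p => max (N.pre t p) (N.post t p)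

/-- Edge relation of the underlying graph, on `P ⊕ T`. -/
def Edge (N : PetriNet P T) : (P ⊕ T) → (P ⊕ T) → Prop
  | Sum.inl p, Sum.inr t => 0 < N.pre t p
  | Sum.inr t, Sum.inl p => 0 < N.post t p
  | _, _ => False

/-- `N` is bounded from marking `m`. -/
def BoundedFrom (N : PetriNet P T) (m : P → ℕ) : Prop :=
  ∃ b : ℕ, ∀ m', N.Reach m m' → ∀ p, m' p ≤ b

/-- `N` is cyclic from marking `m`. -/
def CyclicFrom (N : PetriNet P T) (m : P → ℕ) : Prop :=
  ∀ m', N.Reach m m' → N.Reach m' m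

/-- Transition `t` is quasi-live from `m`. -/
def QuasiLiveT (N : PetriNet P T) (m : P → ℕ) (t : T) : Prop :=
  ∃ m', N.Reach m m' ∧ N.Enabled m' t

/-- `N` is quasi-live from `m`. -/
def QuasiLiveFrom (N : PetriNet P T) (m : P → ℕ) : Prop :=
  ∀ t, N.QuasiLiveT m t

/-- Transition `t` is live from `m`. -/
def LiveT (N : PetriNet P T) (m : P → ℕ) (t : T) : Prop :=
  ∀ m', N.Reach m m' → N.QuasiLiveT m' t

end PetriNet

/-- A workflow net: a Petri net with initial place `ini`, final place `fin`,
no production into `ini`, no consumption from `fin`, and every node on a path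
from `ini` to `fin` in the underlying graph. -/
structure WorkflowNet (P T : Type) extends PetriNet P T where
  ini : P
  fin : P
  ini_ne_fin : ini ≠ fin
  no_prod_ini : ∀ t, post t ini = 0
  no_cons_fin : ∀ t, pre t fin = 0
  on_path : ∀ v : P ⊕ T,
    Relation.ReflTransGen toPetriNet.Edge (Sum.inl ini) v ∧
    Relation.ReflTransGen toPetriNet.Edge v (Sum.inl fin)

namespace WorkflowNet

variable {P T : Type}

/-- The marking `{i : k}`. -/
def iniM [DecidableEq P] (N : WorkflowNet P T) (k : ℕ) : P → ℕ :=
  fun p => if p = N.ini then k else 0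

/-- The marking `{f : k}`. -/
def finM [DecidableEq P] (N : WorkflowNet P T) (k : ℕ) : P → ℕ :=
  fun p => if p = N.fin then k else 0

/-- `N` is `k`-sound. -/
def KSound [DecidableEq P] (N : WorkflowNet P T) (k : ℕ) : Prop :=
  ∀ m, N.toPetriNet.Reach (N.iniM k) m → N.toPetriNet.Reach m (N.finM k)

/-- `N` is generalised sound. -/
def GeneralisedSound [DecidableEq P] (N : WorkflowNet P T) : Prop :=
  ∀ k : ℕ, 1 ≤ k → N.KSound k

/-- `N` is structurally sound. -/
def StructurallySound [DecidableEq P] (N : WorkflowNet P T) : Prop :=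
  ∃ k : ℕ, 1 ≤ k ∧ N.KSound k

/-- All places of `N` are nonredundant. -/
def Nonredundant [DecidableEq P] (N : WorkflowNet P T) : Prop :=
  ∀ p : P, ∃ (k : ℕ) (m : P → ℕ), N.toPetriNet.Reach (N.iniM k) m ∧ 0 < m p

/-- `N` is strongly `k`-sound. -/
def StronglyKSound [DecidableEq P] (N : WorkflowNet P T) (k : ℕ) : Prop :=
  ∀ m : P → ℕ,
    N.toPetriNet.ZReach (fun p => ((N.iniM k) p : ℤ)) (fun p => (m p : ℤ)) →
    N.toPetriNet.Reach m (N.finM k)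

end WorkflowNet


-- ===== auxiliary material =====

namespace PetriNet

variable {P T : Type}

-- new lemmas
lemma Fire.addc {N : PetriNet P T} {m m' : P → ℕ} {t} (h : N.Fire m t m') (c : P → ℕ) :
    N.Fire (fun p => m p + c p) t (fun p => m' p + c p) := by
  obtain ⟨he, heq⟩ := h
  refine ⟨fun p => le_trans (he p) (Nat.le_add_right _ _), fun p => ?_⟩
  have h1 := he p; have h2 := heq p; simp only []; omega

lemma Reach.addc {N : PetriNet P T} {m m' : P → ℕ} (h : N.Reach m m') (c : P → ℕ) :
    N.Reach (fun p => m p + c p) (fun p => m' p + c p) := by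
  induction h with
  | refl => exact .refl
  | tail _ hstep ih => obtain ⟨t, hf⟩ := hstep; exact ih.tail ⟨t, hf.addc c⟩

lemma reach_congr {N : PetriNet P T} {a b a' b' : P → ℕ} (h : N.Reach a b)
    (ha : ∀ p, a p = a' p) (hb : ∀ p, b p = b' p) : N.Reach a' b' := by
  have : a = a' := funext ha
  have hb' : b = b' := funext hb
  exact this ▸ hb' ▸ h

lemma reach_zreach {N : PetriNet P T} {m m' : P → ℕ} (h : N.Reach m m') :
    N.ZReach (fun p => (m p : ℤ)) (fun p => (m' p : ℤ)) := by
  induction h with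
  | refl => exact .refl
  | tail _ hstep ih =>
      obtain ⟨t, he, heq⟩ := hstep
      refine ih.tail ⟨t, fun p => ?_⟩
      have h1 := he p; have h2 := heq p; simp only [eff]; omega

lemma zreach_list {N : PetriNet P T} {a b : P → ℤ} (h : N.ZReach a b) :
    ∃ ts : List T, ∀ p, b p = a p + (ts.map fun t => N.eff t p).sum := by
  induction h with
  | refl => exact ⟨[], by simp⟩
  | tail _ hstep ih =>
      obtain ⟨ts, hts⟩ := ih
      obtain ⟨t, ht⟩ := hstep
      refine ⟨ts ++ [t], fun p => ?_⟩
      rw [ht p, hts p]; simp; ring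

lemma pre_le_maxW [Fintype P] [Fintype T] (N : PetriNet P T) (t : T) (p : P) :
    N.pre t p ≤ N.maxW := by
  have h1 : max (N.pre t p) (N.post t p) ≤ Finset.univ.sup fun q => max (N.pre t q) (N.post t q) :=
    Finset.le_sup (f := fun q => max (N.pre t q) (N.post t q)) (Finset.mem_univ p)
  have h2 : (Finset.univ.sup fun q => max (N.pre t q) (N.post t q)) ≤ N.maxW :=
    Finset.le_sup (f := fun t => Finset.univ.sup fun q => max (N.pre t q) (N.post t q))
      (Finset.mem_univ t)
  exact le_trans (le_trans (le_max_left _ _) h1) h2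

lemma post_le_maxW [Fintype P] [Fintype T] (N : PetriNet P T) (t : T) (p : P) :
    N.post t p ≤ N.maxW := by
  have h1 : max (N.pre t p) (N.post t p) ≤ Finset.univ.sup fun q => max (N.pre t q) (N.post t q) :=
    Finset.le_sup (f := fun q => max (N.pre t q) (N.post t q)) (Finset.mem_univ p)
  have h2 : (Finset.univ.sup fun q => max (N.pre t q) (N.post t q)) ≤ N.maxW :=
    Finset.le_sup (f := fun t => Finset.univ.sup fun q => max (N.pre t q) (N.post t q))
      (Finset.mem_univ t)
  exact le_trans (le_trans (le_max_right _ _) h1) h2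

lemma abs_eff_le_maxW [Fintype P] [Fintype T] (N : PetriNet P T) (t : T) (p : P) :
    |N.eff t p| ≤ (N.maxW : ℤ) := by
  have h1 := N.pre_le_maxW t p; have h2 := N.post_le_maxW t p
  simp only [eff, abs_le]; omega

lemma fire_many [Fintype P] [Fintype T] (N : PetriNet P T) (t : T) :
    ∀ (c : ℕ) (m : P → ℕ), (∀ q, 0 < N.pre t q → c * N.maxW ≤ m q) →
    ∃ m2, N.Reach m m2 ∧ ∀ p, m2 p + c * N.pre t p = m p + c * N.post t p := by
  intro c
  induction c with
  | zero => exact fun m _ => ⟨m, .refl, fun p => by omega⟩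
  | succ c ih =>
      intro m hm
      have hW : ∀ q, N.pre t q ≤ m q := by
        intro q
        rcases Nat.eq_zero_or_pos (N.pre t q) with h | h
        · omega
        · have := hm q h; have := N.pre_le_maxW t q; nlinarith
      set m1 : P → ℕ := fun p => m p - N.pre t p + N.post t p with hm1
      obtain ⟨m2, hr, heq⟩ := ih m1 (by
        intro q hq
        have h0 := hm q hq
        have h1 := hW q
        have h2 := N.pre_le_maxW t q
        simp only [hm1]
        rw [Nat.succ_mul] at h0; omega)
      refine ⟨m2, Relation.ReflTransGen.head ⟨t, hW, fun p => rfl⟩ hr, fun p => ?_⟩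
      have h3 := heq p; have h4 := hW p
      simp only [hm1] at h3
      rw [Nat.succ_mul, Nat.succ_mul]; omega
lemma fire_seq (N : PetriNet P T) : ∀ (ts : List T) (M0 : P → ℕ),
    (∀ j (h : j < ts.length) p,
      (N.pre (ts.get ⟨j, h⟩) p : ℤ) ≤ (M0 p : ℤ) + ((ts.take j).map fun t => N.eff t p).sum) →
    ∃ M1, N.Reach M0 M1 ∧ ∀ p, (M1 p : ℤ) = M0 p + (ts.map fun t => N.eff t p).sum := by
  intro ts
  induction ts with
  | nil => exact fun M0 _ => ⟨M0, .refl, by simp⟩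
  | cons t ts ih =>
      intro M0 hpre
      have he : N.Enabled M0 t := by
        intro p
        have := hpre 0 (by simp) p
        simp at this
        exact_mod_cast this
      set M0' : P → ℕ := fun p => M0 p - N.pre t p + N.post t p with hM0'
      have hcast : ∀ p, (M0' p : ℤ) = M0 p + N.eff t p := by
        intro p; have := he p; simp only [hM0', eff]; omega
      obtain ⟨M1, hr, hsum⟩ := ih M0' (by
        intro j hj p
        have := hpre (j+1) (by simpa using hj) p
        simp only [List.get_cons_succ, List.take_succ_cons, List.map_cons, List.sum_cons] at this ⊢
        rw [hcast p]
        linarith)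
      refine ⟨M1, Relation.ReflTransGen.head ⟨t, he, fun p => rfl⟩ hr, fun p => ?_⟩
      rw [hsum p, hcast p]
      simp
      ring

end PetriNet

namespace WorkflowNet

variable {P T : Type}

-- new auxiliary material
variable [DecidableEq P] (N : WorkflowNet P T)

lemma iniM_add (k l : ℕ) : ∀ p, N.iniM (k + l) p = N.iniM k p + N.iniM l p := by
  intro p; simp only [iniM]; split <;> simp

/-- removing dead tokens on the final place -/
lemma reach_sub_fin {b : P → ℕ} (a : P → ℕ) (c : ℕ)
    (h : N.toPetriNet.Reach (fun p => a p + N.finM c p) b) :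
    ∃ b', (∀ p, b p = b' p + N.finM c p) ∧ N.toPetriNet.Reach a b' := by
  generalize hstart : (fun p => a p + N.finM c p) = start at h
  induction h with
  | refl => exact ⟨a, fun p => by rw [← hstart], .refl⟩
  | tail _ hstep ih =>
      obtain ⟨b', hb', hr⟩ := ih
      obtain ⟨t, he, heq⟩ := hstep
      have hen : N.toPetriNet.Enabled b' t := by
        intro p
        have h1 := he p
        rw [hb' p] at h1
        by_cases hp : p = N.fin
        · subst hp; rw [N.no_cons_fin t]; omega
        · simp only [finM, if_neg hp] at h1; omega
      refine ⟨fun p => b' p - N.toPetriNet.pre t p + N.toPetriNet.post t p, fun p => ?_,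
        hr.tail ⟨t, hen, fun p => rfl⟩⟩
      have h1 := heq p
      have h2 := hb' p
      have h3 := hen p
      dsimp only
      omega

def InSupp (N : WorkflowNet P T) (L : List T) (p : P) : Prop :=
  p = N.ini ∨ ∃ t ∈ L, 0 < N.toPetriNet.post t p

lemma InSupp.mono {N : WorkflowNet P T} {L L' : List T} (h : L ⊆ L') {p : P}
    (hp : N.InSupp L p) : N.InSupp L' p := by
  rcases hp with h1 | ⟨t, ht, h2⟩
  · exact Or.inl h1
  · exact Or.inr ⟨t, h ht, h2⟩

def GoodChain (N : WorkflowNet P T) (L : List T) : Prop :=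
  L.Nodup ∧ ∀ j (h : j < L.length), ∀ q,
    0 < N.toPetriNet.pre (L.get ⟨j, h⟩) q → N.InSupp (L.take j) q

def Saturated (N : WorkflowNet P T) (L : List T) : Prop :=
  N.GoodChain L ∧ ∀ t, (∀ q, 0 < N.toPetriNet.pre t q → N.InSupp L q) → t ∈ L

lemma exists_saturated [Fintype T] : ∃ L, N.Saturated L := by
  classical
  suffices h : ∀ fuel (L : List T), N.GoodChain L → Fintype.card T - L.length ≤ fuel →
      ∃ L', N.Saturated L' by
    obtain ⟨L', h⟩ := h (Fintype.card T) [] ⟨List.nodup_nil, by simp⟩ (by simp)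
    exact ⟨L', h⟩
  intro fuel
  induction fuel with
  | zero =>
      intro L hG hf
      refine ⟨L, hG, fun t _ => ?_⟩
      by_contra ht
      have h1 : (t :: L).Nodup := List.nodup_cons.mpr ⟨ht, hG.1⟩
      have h2 := h1.length_le_card
      simp at h2
      omega
  | succ fuel ih =>
      intro L hG hf
      by_cases hsat : ∀ t, (∀ q, 0 < N.toPetriNet.pre t q → N.InSupp L q) → t ∈ L
      · exact ⟨L, hG, hsat⟩
      · push_neg at hsat
        obtain ⟨t, hpre, ht⟩ := hsat
        have hnd : (L ++ [t]).Nodup := by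
          simp [List.nodup_append, hG.1, ht]
          intro a ha hat; exact ht (hat ▸ ha)
        have hG' : N.GoodChain (L ++ [t]) := by
          refine ⟨hnd, fun j hj q hq => ?_⟩
          have hj2 : j < L.length + 1 := by simpa using hj
          rcases Nat.lt_or_ge j L.length with hj' | hj'
          · have hget : (L ++ [t]).get ⟨j, hj⟩ = L.get ⟨j, hj'⟩ := by
              simp [List.get_eq_getElem, List.getElem_append_left hj']
            have htake : (L ++ [t]).take j = L.take j := by
              exact List.take_append_of_le_length (le_of_lt hj')
            rw [hget] at hq
            rw [htake]
            exact hG.2 j hj' q hq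
          · have hj'' : j = L.length := by omega
            subst hj''
            have hget : (L ++ [t]).get ⟨L.length, hj⟩ = t := by
              simp [List.get_eq_getElem, List.getElem_append_right (le_refl L.length)]
            have htake : (L ++ [t]).take L.length = L := by
              simp [List.take_append_of_le_length]
            rw [hget] at hq
            rw [htake]
            exact hpre q hq
        have hlen : L.length < Fintype.card T := by
          have := hnd.length_le_card
          simp at this
          omega
        exact ih (L ++ [t]) hG' (by simp; omega)

lemma marked_inSupp {L : List T} (hL : N.Saturated L) {l : ℕ} {m : P → ℕ}
    (h : N.toPetriNet.Reach (N.iniM l) m) : ∀ p, 0 < m p → N.InSupp L p := by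
  induction h with
  | refl => intro p hp; left; by_contra hne; simp [iniM, hne] at hp
  | tail _ hstep ih =>
      obtain ⟨t, he, heq⟩ := hstep
      have htL : t ∈ L := by
        refine hL.2 t fun q hq => ih q ?_
        have := he q; omega
      intro p hp
      rw [heq p] at hp
      rcases Nat.eq_zero_or_pos (N.toPetriNet.post t p) with h0 | h0
      · exact ih p (by omega)
      · exact Or.inr ⟨t, htL, h0⟩

lemma budget [Fintype P] [Fintype T] {L : List T} (hL : N.GoodChain L) :
    ∀ j, j ≤ L.length → ∀ c, N.toPetriNet.maxW ≤ c →
    ∃ l, l ≤ c * (N.toPetriNet.maxW + 2) ^ j ∧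
      ∃ m, N.toPetriNet.Reach (N.iniM l) m ∧ ∀ p, N.InSupp (L.take j) p → c ≤ m p := by
  intro j
  induction j with
  | zero =>
      intro _ c _
      refine ⟨c, by simp, N.iniM c, .refl, fun p hp => ?_⟩
      rcases hp with h1 | ⟨t, ht, _⟩
      · simp [iniM, h1]
      · simp at ht
  | succ j ih =>
      intro hj c hc
      set W := N.toPetriNet.maxW with hW
      have hjle : j ≤ L.length := by omega
      have hc' : W ≤ c * (W + 1) := by nlinarith
      obtain ⟨l, hl, m, hrm, hm⟩ := ih hjle (c * (W + 1)) hc'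
      have hjlt : j < L.length := by omega
      set t := L.get ⟨j, hjlt⟩ with ht
      obtain ⟨m2, hr2, heq2⟩ := N.toPetriNet.fire_many t c m (by
        intro q hq
        have h1 : N.InSupp (L.take j) q := hL.2 j hjlt q hq
        have h2 := hm q h1
        nlinarith)
      have hbound : c * (W + 1) * (W + 2) ^ j ≤ c * (W + 2) ^ (j + 1) := by
        calc c * (W + 1) * (W + 2) ^ j = c * (W + 2) ^ j * (W + 1) := by ring
          _ ≤ c * (W + 2) ^ j * (W + 2) := Nat.mul_le_mul_left _ (by omega)
          _ = c * (W + 2) ^ (j + 1) := by ring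
      refine ⟨l, le_trans hl hbound, m2, hrm.trans hr2, fun p hp => ?_⟩
      have htake : L.take (j+1) = L.take j ++ [t] := by
        rw [ht]
        rw [← List.take_concat_get hjlt]
        simp
      rw [htake] at hp
      have hpre_le := N.toPetriNet.pre_le_maxW t p
      have hpost_le := N.toPetriNet.post_le_maxW t p
      have heqp := heq2 p
      have hsplit : c * (W + 1) = c * W + c := by ring
      have hone : c * 1 = c := by ring
      rcases hp with h1 | ⟨t', ht', h2⟩
      · have h3 := hm p (Or.inl h1)
        have h4 : c * N.pre t p ≤ c * W := Nat.mul_le_mul_left c hpre_le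
        omega
      · rcases List.mem_append.mp ht' with h3 | h3
        · have h4 := hm p (Or.inr ⟨t', h3, h2⟩)
          have h5 : c * N.pre t p ≤ c * W := Nat.mul_le_mul_left c hpre_le
          omega
        · have h4 : t' = t := by simpa using h3
          subst h4
          rcases Nat.eq_zero_or_pos (N.toPetriNet.pre t p) with h5 | h5
          · have h6 : c * 1 ≤ c * N.post t p := Nat.mul_le_mul_left c h2
            rw [h5, Nat.mul_zero] at heqp
            omega
          · have h6 := hm p (hL.2 j hjlt p h5)
            have h7 : c * N.pre t p ≤ c * W := Nat.mul_le_mul_left c hpre_le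
            omega

lemma cover [Fintype P] [Fintype T] (hN : N.Nonredundant) (c : ℕ)
    (hc : N.toPetriNet.maxW ≤ c) :
    ∃ l, l ≤ c * (N.toPetriNet.maxW + 2) ^ (Fintype.card T) ∧
      ∃ m, N.toPetriNet.Reach (N.iniM l) m ∧ ∀ p, c ≤ m p := by
  obtain ⟨L, hL⟩ := N.exists_saturated
  obtain ⟨l, hl, m, hrm, hm⟩ := N.budget hL.1 L.length le_rfl c hc
  refine ⟨l, le_trans hl ?_, m, hrm, fun p => ?_⟩
  · have h1 : L.length ≤ Fintype.card T := hL.1.1.length_le_card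
    exact Nat.mul_le_mul_left c (Nat.pow_le_pow_right (by omega) h1)
  · obtain ⟨k0, m0, hr0, hp0⟩ := hN p
    have h2 : N.InSupp L p := N.marked_inSupp hL hr0 p hp0
    exact hm p (by rwa [List.take_length])

end WorkflowNet

namespace Steinitz

open Finset

variable {P : Type} [Fintype P] [DecidableEq P] {n : ℕ}

/-- feasibility of a fractional selection on `S` -/
def feas (x : Fin n → P → ℤ) (S : Finset (Fin n)) : Prop :=
  ∃ lam : Fin n → ℝ, (∀ i ∈ S, 0 ≤ lam i ∧ lam i ≤ 1) ∧
    (∑ i ∈ S, lam i) = (S.card : ℝ) - (Fintype.card P : ℝ) ∧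
    ∀ p, (∑ i ∈ S, lam i * (x i p : ℝ)) =
      (((S.card : ℝ) - (Fintype.card P : ℝ)) / (n : ℝ)) * (∑ i : Fin n, (x i p : ℝ))

lemma feas_univ (x : Fin n → P → ℤ) (hn : Fintype.card P ≤ n) :
    feas x (Finset.univ : Finset (Fin n)) := by
  rcases Nat.eq_zero_or_pos n with h0 | h0
  · subst h0
    have hd : Fintype.card P = 0 := by omega
    refine ⟨fun _ => 0, fun i _ => ⟨le_rfl, zero_le_one⟩, ?_, fun p => ?_⟩ <;>
      simp [hd]
  · have hne : (n : ℝ) ≠ 0 := by positivity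
    have hdn : (Fintype.card P : ℝ) ≤ (n : ℝ) := by exact_mod_cast hn
    refine ⟨fun _ => ((n : ℝ) - Fintype.card P) / n, fun i _ => ⟨?_, ?_⟩, ?_, fun p => ?_⟩
    · apply div_nonneg (by linarith) (by positivity)
    · rw [div_le_one (by positivity)]; linarith
    · rw [Finset.sum_const, Finset.card_univ, Fintype.card_fin, nsmul_eq_mul]
      field_simp
    · rw [← Finset.mul_sum, Finset.card_univ, Fintype.card_fin]

lemma prefix_lb (x : Fin n → P → ℤ) (W : ℕ) (hx : ∀ i p, |x i p| ≤ (W:ℤ)) :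
    ∀ (l : List (Fin n)) (p : P),
      -((l.length : ℤ) * W) ≤ ((l.map fun i => x i p)).sum := by
  intro l p
  induction l with
  | nil => simp
  | cons a l ih =>
      have h := abs_le.mp (hx a p)
      simp only [List.map_cons, List.sum_cons, List.length_cons]
      push_cast
      linarith

end Steinitz

namespace Steinitz

variable {P : Type} [Fintype P] [DecidableEq P] {n : ℕ}

open Finset

lemma peel (x : Fin n → P → ℤ) {S : Finset (Fin n)} (hd : Fintype.card P < S.card)
    (hf : feas x S) : ∃ i ∈ S, feas x (S.erase i) := by
  classical
  obtain ⟨lam0, hbox0, hsum0, hvec0⟩ := hf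
  set d : ℕ := Fintype.card P with hdd
  set k : ℕ := S.card with hkk
  have hk1 : d + 1 ≤ k := hd
  have hkd : (0:ℝ) < (k:ℝ) - d := by
    have : (d:ℝ) < k := by exact_mod_cast hd
    linarith
  have hkR : (d:ℝ) + 1 ≤ (k:ℝ) := by exact_mod_cast hk1
  have hn0 : 0 < n := by
    have hSne : S.Nonempty := Finset.card_pos.mp (by omega)
    obtain ⟨i, _⟩ := hSne
    exact i.pos
  have hnR : (n : ℝ) ≠ 0 := by positivity
  set σ : P → ℝ := fun p => ∑ i : Fin n, (x i p : ℝ) with hσ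
  set Q : (Fin n → ℝ) → Prop := fun lam =>
    (∀ i ∈ S, 0 ≤ lam i ∧ lam i ≤ 1) ∧
    (∑ i ∈ S, lam i) = (k:ℝ) - 1 - d ∧
    ∀ p, (∑ i ∈ S, lam i * (x i p : ℝ)) = (((k:ℝ) - 1 - d) / n) * σ p with hQdef
  -- initial witness for Q
  have hQ0 : Q (fun i => (((k:ℝ) - 1 - d) / ((k:ℝ) - d)) * lam0 i) := by
    set a : ℝ := ((k:ℝ) - 1 - d) / ((k:ℝ) - d) with ha
    have ha0 : 0 ≤ a := div_nonneg (by linarith) (le_of_lt hkd)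
    have ha1 : a ≤ 1 := by rw [ha, div_le_one hkd]; linarith
    refine ⟨fun i hi => ?_, ?_, fun p => ?_⟩
    · obtain ⟨h1, h2⟩ := hbox0 i hi
      refine ⟨mul_nonneg ha0 h1, ?_⟩
      calc a * lam0 i ≤ 1 * 1 := mul_le_mul ha1 h2 h1 zero_le_one
        _ = 1 := one_mul 1
    · rw [← Finset.mul_sum, hsum0, ha]
      field_simp
    · have hterm : ∀ i ∈ S, a * lam0 i * (x i p : ℝ) = a * (lam0 i * (x i p : ℝ)) :=
        fun i _ => by ring
      rw [Finset.sum_congr rfl hterm, ← Finset.mul_sum, hvec0 p, ha]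
      field_simp
      try ring
  -- the count of integral coordinates, and its maximum over Q
  set cnt : (Fin n → ℝ) → ℕ :=
    fun lam => (S.filter (fun i => lam i = 0 ∨ lam i = 1)).card with hcntdef
  have hcntle : ∀ lam, cnt lam ≤ k := fun lam => Finset.card_filter_le _ _
  set Pr : ℕ → Prop := fun c => ∃ lam, Q lam ∧ cnt lam = c with hPrdef
  set c0 := Nat.findGreatest Pr k with hc0
  have hPr1 : Pr (cnt (fun i => (((k:ℝ) - 1 - d) / ((k:ℝ) - d)) * lam0 i)) := ⟨_, hQ0, rfl⟩
  have hPrc0 : Pr c0 := Nat.findGreatest_spec (m := cnt _) (hcntle _) hPr1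
  have hmax : ∀ lam, Q lam → cnt lam ≤ c0 :=
    fun lam hQl => Nat.le_findGreatest (hcntle _) ⟨lam, hQl, rfl⟩
  obtain ⟨lam, hQl, hcl⟩ := hPrc0
  obtain ⟨hbox, hsum, hvec⟩ := hQl
  -- main claim : some coordinate of `lam` on `S` is zero
  have hz : ∃ i ∈ S, lam i = 0 := by
    by_contra hz
    push_neg at hz
    set F : Finset (Fin n) := S.filter (fun i => ¬(lam i = 0 ∨ lam i = 1)) with hFdef
    have hfrac : ∀ i ∈ F, 0 < lam i ∧ lam i < 1 := by
      intro i hi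
      obtain ⟨hiS, hcond⟩ := Finset.mem_filter.mp hi
      push_neg at hcond
      obtain ⟨h1, h2⟩ := hbox i hiS
      exact ⟨lt_of_le_of_ne h1 (Ne.symm hcond.1), lt_of_le_of_ne h2 hcond.2⟩
    -- Step A : F.card ≤ d + 1
    have hFcard : F.card ≤ d + 1 := by
      by_contra hF
      push_neg at hF
      set φ : (↥F → ℝ) →ₗ[ℝ] ((P → ℝ) × ℝ) :=
        { toFun := fun u => (fun p => ∑ i : ↥F, u i * (x i p : ℝ), ∑ i : ↥F, u i),
          map_add' := fun a b => by
            refine Prod.ext ?_ ?_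
            · funext p
              simp [add_mul, Finset.sum_add_distrib]
            · simp [Finset.sum_add_distrib]
          map_smul' := fun r a => by
            refine Prod.ext ?_ ?_
            · funext p
              simp [Finset.mul_sum, mul_assoc]
            · simp [Finset.mul_sum] } with hφdef
      have hnotinj : ¬ Function.Injective φ := by
        intro hinj
        have hle := LinearMap.finrank_le_finrank_of_injective hinj
        rw [Module.finrank_pi ℝ, Module.finrank_prod, Module.finrank_pi ℝ,
          Module.finrank_self ℝ, Fintype.card_coe] at hle
        omega
      rw [Function.not_injective_iff] at hnotinj
      obtain ⟨ua, ub, hab, hne⟩ := hnotinj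
      set u : ↥F → ℝ := ua - ub with hu
      have hφu : φ u = 0 := by rw [map_sub, hab, sub_self]
      have hune : u ≠ 0 := sub_ne_zero.mpr hne
      set v : Fin n → ℝ := fun i => if h : i ∈ F then u ⟨i, h⟩ else 0 with hv
      have hvF : ∀ i, i ∉ F → v i = 0 := fun i hi => dif_neg hi
      have hvsum : ∑ i ∈ S, v i = 0 := by
        have h1 : ∑ i ∈ F, v i = ∑ i ∈ S, v i :=
          Finset.sum_subset (Finset.filter_subset _ S) (fun i _ hni => hvF i hni)
        have h2 : ∑ i ∈ F, v i = ∑ i : ↥F, u i := by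
          rw [← Finset.sum_attach F v]
          apply Finset.sum_congr rfl
          intro i _
          simp [hv]
        have h3 : ∑ i : ↥F, u i = 0 := congrArg Prod.snd hφu
        rw [← h1, h2, h3]
      have hvvec : ∀ p, ∑ i ∈ S, v i * (x i p : ℝ) = 0 := by
        intro p
        have h1 : ∑ i ∈ F, v i * (x i p : ℝ) = ∑ i ∈ S, v i * (x i p : ℝ) :=
          Finset.sum_subset (Finset.filter_subset _ S)
            (fun i _ hni => by rw [hvF i hni, zero_mul])
        have h2 : ∑ i ∈ F, v i * (x i p : ℝ) = ∑ i : ↥F, u i * (x i p : ℝ) := by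
          rw [← Finset.sum_attach F (fun i => v i * (x i p : ℝ))]
          apply Finset.sum_congr rfl
          intro i _
          simp [hv]
        have h3 : ∑ i : ↥F, u i * (x i p : ℝ) = 0 :=
          congrFun (congrArg Prod.fst hφu) p
        rw [← h1, h2, h3]
      have hexv : ∃ i ∈ F, v i ≠ 0 := by
        obtain ⟨j, hj⟩ := Function.ne_iff.mp hune
        refine ⟨(j : Fin n), j.2, ?_⟩
        have huv : v (j : Fin n) = u j := by
          simp only [hv, dif_pos j.2]
        rw [huv]
        simpa using hj
      set K : Finset (Fin n) := F.filter (fun i => v i ≠ 0) with hK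
      have hKne : K.Nonempty := by
        obtain ⟨i, hiF, hiv⟩ := hexv
        exact ⟨i, Finset.mem_filter.mpr ⟨hiF, hiv⟩⟩
      set g : Fin n → ℝ := fun i => if 0 < v i then (1 - lam i) / v i else lam i / (-(v i))
        with hg
      have hgeq : ∀ i, g i = if 0 < v i then (1 - lam i) / v i else lam i / (-(v i)) :=
        fun i => by rw [hg]
      have hgpos : ∀ i ∈ K, 0 < g i := by
        intro i hi
        obtain ⟨hiF, hiv⟩ := Finset.mem_filter.mp hi
        obtain ⟨hl0, hl1⟩ := hfrac i hiF
        rw [hgeq i]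
        split_ifs with hvi
        · exact div_pos (by linarith) hvi
        · have : v i < 0 := lt_of_le_of_ne (not_lt.mp hvi) hiv
          exact div_pos hl0 (by linarith)
      set ts : ℝ := K.inf' hKne g with hts
      have htspos : 0 < ts := (Finset.lt_inf'_iff hKne).mpr hgpos
      set lam' : Fin n → ℝ := fun i => lam i + ts * v i with hlam'
      have hunch : ∀ i, v i = 0 → lam' i = lam i := by
        intro i hiv; simp [hlam', hiv]
      have hbox' : ∀ i ∈ S, 0 ≤ lam' i ∧ lam' i ≤ 1 := by
        intro i hiS
        by_cases hiF : i ∈ F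
        · by_cases hiv : v i = 0
          · rw [hunch i hiv]; exact hbox i hiS
          · have hiK : i ∈ K := Finset.mem_filter.mpr ⟨hiF, hiv⟩
            have htsle : ts ≤ g i := Finset.inf'_le g hiK
            obtain ⟨hl0, hl1⟩ := hfrac i hiF
            by_cases hvi : 0 < v i
            · constructor
              · have : 0 ≤ ts * v i := le_of_lt (mul_pos htspos hvi)
                rw [hlam']; dsimp only; linarith
              · have h1 : ts * v i ≤ g i * v i :=
                  mul_le_mul_of_nonneg_right htsle (le_of_lt hvi)
                have h2 : g i * v i = 1 - lam i := by
                  rw [hgeq i, if_pos hvi, div_mul_cancel₀ _ (ne_of_gt hvi)]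
                rw [hlam']; dsimp only; linarith
            · have hneg : v i < 0 := lt_of_le_of_ne (not_lt.mp hvi) hiv
              constructor
              · have h1 : g i * v i ≤ ts * v i :=
                  mul_le_mul_of_nonpos_right htsle (le_of_lt hneg)
                have h2 : g i * v i = -(lam i) := by
                  rw [hgeq i, if_neg hvi, div_mul_eq_mul_div, div_neg, mul_div_assoc,
                    div_self hiv, mul_one]
                rw [hlam']; dsimp only; linarith
              · have : ts * v i < 0 := mul_neg_of_pos_of_neg htspos hneg
                rw [hlam']; dsimp only; linarith
        · rw [hunch i (hvF i hiF)]; exact hbox i hiS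
      have hsum' : ∑ i ∈ S, lam' i = (k:ℝ) - 1 - d := by
        rw [hlam']
        dsimp only
        rw [Finset.sum_add_distrib, ← Finset.mul_sum, hvsum, hsum]
        ring
      have hvec' : ∀ p, ∑ i ∈ S, lam' i * (x i p : ℝ) = (((k:ℝ) - 1 - d) / n) * σ p := by
        intro p
        rw [hlam']
        dsimp only
        have hterm : ∀ i ∈ S, (lam i + ts * v i) * (x i p : ℝ) =
            lam i * (x i p : ℝ) + ts * (v i * (x i p : ℝ)) := fun i _ => by ring
        rw [Finset.sum_congr rfl hterm, Finset.sum_add_distrib, ← Finset.mul_sum,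
          hvvec p, hvec p]
        ring
      have hQ' : Q lam' := ⟨hbox', hsum', hvec'⟩
      -- count increases
      obtain ⟨i0, hi0K, hgi0⟩ := Finset.exists_mem_eq_inf' hKne g
      have hi0F : i0 ∈ F := (Finset.mem_filter.mp hi0K).1
      have hi0S : i0 ∈ S := (Finset.mem_filter.mp hi0F).1
      have hi0v : v i0 ≠ 0 := (Finset.mem_filter.mp hi0K).2
      have hint : lam' i0 = 0 ∨ lam' i0 = 1 := by
        by_cases hvi : 0 < v i0
        · right
          have hgv : ts * v i0 = 1 - lam i0 := by
            rw [hts, hgi0, hgeq i0, if_pos hvi, div_mul_cancel₀ _ (ne_of_gt hvi)]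
          rw [hlam']; dsimp only; linarith
        · left
          have hneg : v i0 < 0 := lt_of_le_of_ne (not_lt.mp hvi) hi0v
          have hgv : ts * v i0 = -(lam i0) := by
            rw [hts, hgi0, hgeq i0, if_neg hvi, div_mul_eq_mul_div, div_neg, mul_div_assoc,
              div_self hi0v, mul_one]
          rw [hlam']; dsimp only; linarith
      set Sf : Finset (Fin n) := S.filter (fun i => lam i = 0 ∨ lam i = 1) with hSf
      have hi0nSf : i0 ∉ Sf := by
        intro hmem
        have := (Finset.mem_filter.mp hmem).2
        have := (Finset.mem_filter.mp hi0F).2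
        tauto
      have hsub : insert i0 Sf ⊆ S.filter (fun i => lam' i = 0 ∨ lam' i = 1) := by
        intro i hi
        rcases Finset.mem_insert.mp hi with h | h
        · subst h; exact Finset.mem_filter.mpr ⟨hi0S, hint⟩
        · obtain ⟨hiS, hcond⟩ := Finset.mem_filter.mp h
          have hiF : i ∉ F := by
            rw [hFdef]
            intro hmem
            exact (Finset.mem_filter.mp hmem).2 hcond
          rw [Finset.mem_filter]
          exact ⟨hiS, by rw [hunch i (hvF i hiF)]; exact hcond⟩
      have hcard : c0 + 1 ≤ cnt lam' := by
        have h1 : (insert i0 Sf).card = c0 + 1 := by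
          rw [Finset.card_insert_of_notMem hi0nSf]
          rw [hcntdef] at hcl
          rw [← hcl]
        rw [← h1]
        exact Finset.card_le_card hsub
      have := hmax lam' hQ'
      omega
    -- Step B : counting contradiction
    set O : Finset (Fin n) := S.filter (fun i => lam i = 1) with hO
    have hOeq : S.filter (fun i => lam i = 0 ∨ lam i = 1) = O := by
      rw [hO]
      apply Finset.filter_congr
      intro i hiS
      exact ⟨fun h => h.resolve_left (hz i hiS), Or.inr⟩
    have hSplit : O.card + F.card = k := by
      rw [← hOeq, hFdef]
      exact Finset.card_filter_add_card_filter_not _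
    have hsumO : ∑ i ∈ O, lam i = (O.card : ℝ) := by
      rw [Finset.sum_congr rfl (fun i hi => (Finset.mem_filter.mp hi).2)]
      simp
      rfl
    have htot : ∑ i ∈ O, lam i + ∑ i ∈ F, lam i = ∑ i ∈ S, lam i := by
      rw [← hOeq, hFdef]
      exact Finset.sum_filter_add_sum_filter_not S _ lam
    have hcastOF : (O.card : ℝ) + (F.card : ℝ) = (k : ℝ) := by exact_mod_cast hSplit
    have hFR : (F.card : ℝ) ≤ (d : ℝ) + 1 := by exact_mod_cast hFcard
    have hFsum : ∑ i ∈ F, lam i = (F.card : ℝ) - 1 - d := by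
      rw [hsum, hsumO] at htot
      linarith
    rcases Finset.eq_empty_or_nonempty F with hFe | hFne
    · rw [hFe] at hFsum
      simp at hFsum
      have hd0 : (0:ℝ) ≤ d := Nat.cast_nonneg d
      linarith
    · have hpos : 0 < ∑ i ∈ F, lam i := Finset.sum_pos (fun i hi => (hfrac i hi).1) hFne
      linarith
  -- conclude : remove the zero coordinate
  obtain ⟨i, hiS, hi0⟩ := hz
  refine ⟨i, hiS, lam, fun j hj => hbox j (Finset.mem_of_mem_erase hj), ?_, fun p => ?_⟩
  · rw [Finset.sum_erase _ hi0, hsum, Finset.card_erase_of_mem hiS]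
    have : (1:ℕ) ≤ k := by omega
    rw [← hkk, ← hdd]
    push_cast [Nat.cast_sub this]
    ring
  · rw [Finset.sum_erase _ (by rw [hi0, zero_mul]), hvec p,
      Finset.card_erase_of_mem hiS]
    have : (1:ℕ) ≤ k := by omega
    rw [← hkk, ← hdd]
    simp only [hσ]
    push_cast [Nat.cast_sub this]
    ring

end Steinitz

namespace Steinitz

variable {P : Type} [Fintype P] [DecidableEq P] {n : ℕ}

open Finset

lemma full_sum_lb (x : Fin n → P → ℤ) (s : P → ℤ) (W : ℕ)
    (hx : ∀ i p, |x i p| ≤ (W:ℤ)) (hs : ∀ p, 0 ≤ s p)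
    (hse : ∀ p, 0 ≤ s p + ∑ i : Fin n, x i p)
    {S : Finset (Fin n)} (hf : feas x S) (p : P) :
    -((Fintype.card P : ℤ) * W) ≤ s p + ∑ i ∈ S, x i p := by
  classical
  obtain ⟨lam, hbox, hsum, hvec⟩ := hf
  rcases Nat.eq_zero_or_pos n with hn0 | hn0
  · have hSe : S = ∅ := by
      apply Finset.eq_empty_of_forall_notMem
      intro i _
      subst hn0
      exact absurd i.2 (by omega)
    subst hSe
    simp only [Finset.sum_empty, add_zero]
    have h1 := hs p
    have h2 : (0:ℤ) ≤ (Fintype.card P : ℤ) * W := by positivity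
    linarith
  · have hrr : -((Fintype.card P : ℝ) * W) ≤ (s p : ℝ) + ∑ i ∈ S, (x i p : ℝ) := by
      have hcardn : (S.card : ℝ) ≤ (n : ℝ) := by
        exact_mod_cast le_trans (Finset.card_le_univ S) (le_of_eq (by simp))
      have hnR : (0:ℝ) < n := by exact_mod_cast hn0
      have hθ1 : ((S.card : ℝ) - Fintype.card P) / n ≤ 1 := by
        rw [div_le_one hnR]
        have : (0:ℝ) ≤ (Fintype.card P : ℝ) := Nat.cast_nonneg _
        linarith
      have hθ0 : 0 ≤ ((S.card : ℝ) - Fintype.card P) / n := by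
        have hsum_lb : (0:ℝ) ≤ ∑ i ∈ S, lam i :=
          Finset.sum_nonneg (fun i hi => (hbox i hi).1)
        rw [hsum] at hsum_lb
        apply div_nonneg (by linarith) (le_of_lt hnR)
      have hsplit : ∑ i ∈ S, (x i p : ℝ) =
          (∑ i ∈ S, (1 - lam i) * (x i p : ℝ)) + ∑ i ∈ S, lam i * (x i p : ℝ) := by
        rw [← Finset.sum_add_distrib]
        exact Finset.sum_congr rfl (fun i _ => by ring)
      have hone : ∑ i ∈ S, (1 - lam i) = (Fintype.card P : ℝ) := by
        rw [Finset.sum_sub_distrib, hsum]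
        simp
      have hE : -((Fintype.card P : ℝ) * W) ≤ ∑ i ∈ S, (1 - lam i) * (x i p : ℝ) := by
        have h1 : ∀ i ∈ S, (1 - lam i) * (-(W:ℝ)) ≤ (1 - lam i) * (x i p : ℝ) := by
          intro i hi
          obtain ⟨hb1, hb2⟩ := hbox i hi
          have hax := abs_le.mp (hx i p)
          have haxR : -(W:ℝ) ≤ (x i p : ℝ) := by exact_mod_cast hax.1
          exact mul_le_mul_of_nonneg_left haxR (by linarith)
        have h2 : ∑ i ∈ S, (1 - lam i) * (-(W:ℝ)) ≤ ∑ i ∈ S, (1 - lam i) * (x i p : ℝ) :=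
          Finset.sum_le_sum h1
        have h3 : ∑ i ∈ S, (1 - lam i) * (-(W:ℝ)) = -((Fintype.card P : ℝ) * W) := by
          rw [← Finset.sum_mul, hone]
          ring
        linarith
      have hσnn : 0 ≤ (s p : ℝ) +
          (((S.card : ℝ) - Fintype.card P) / n) * (∑ i : Fin n, (x i p : ℝ)) := by
        have hsR : 0 ≤ (s p : ℝ) := by exact_mod_cast hs p
        have hseR : 0 ≤ (s p : ℝ) + (∑ i : Fin n, (x i p : ℝ)) := by
          have h6 := hse p
          have : ((s p + ∑ i : Fin n, x i p : ℤ) : ℝ) = (s p : ℝ) + ∑ i : Fin n, (x i p : ℝ) := by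
            push_cast
            ring
          rw [← this]
          exact_mod_cast h6
        have t1 : 0 ≤ (1 - ((S.card : ℝ) - Fintype.card P) / n) * (s p : ℝ) :=
          mul_nonneg (by linarith) hsR
        have t2 : 0 ≤ (((S.card : ℝ) - Fintype.card P) / n) *
            ((s p : ℝ) + ∑ i : Fin n, (x i p : ℝ)) := mul_nonneg hθ0 hseR
        nlinarith
      have hv := hvec p
      rw [hsplit, hv]
      linarith
    have hfin : ((-((Fintype.card P : ℕ) * W : ℕ) : ℤ) : ℝ) ≤
        ((s p + ∑ i ∈ S, x i p : ℤ) : ℝ) := by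
      push_cast
      push_cast at hrr
      linarith
    exact_mod_cast hfin

lemma assemble (x : Fin n → P → ℤ) (s : P → ℤ) (W : ℕ)
    (hx : ∀ i p, |x i p| ≤ (W:ℤ)) (hs : ∀ p, 0 ≤ s p)
    (hse : ∀ p, 0 ≤ s p + ∑ i : Fin n, x i p) :
    ∀ (c : ℕ) (S : Finset (Fin n)), S.card = c → Fintype.card P ≤ c → feas x S →
    ∃ L : List (Fin n), L.Nodup ∧ (∀ i, i ∈ L ↔ i ∈ S) ∧
      ∀ (j : ℕ) (p : P),
        -((Fintype.card P : ℤ) * W) ≤ s p + ((L.take j).map fun i => x i p).sum := by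
  intro c
  induction c using Nat.strong_induction_on with
  | _ c ih =>
    intro S hcard hd hf
    rcases eq_or_lt_of_le hd with heq | hlt
    · -- base case : |S| = card P, use the trivial length bound
      refine ⟨S.toList, Finset.nodup_toList S, fun i => Finset.mem_toList, fun j p => ?_⟩
      have h1 := prefix_lb x W hx (S.toList.take j) p
      have h2 : ((S.toList.take j).length : ℤ) ≤ (Fintype.card P : ℤ) := by
        have hlen : S.toList.length = S.card := Finset.length_toList S
        have h5 : (S.toList.take j).length ≤ S.toList.length := by
          rw [List.length_take]
          omega
        have : (S.toList.take j).length ≤ Fintype.card P := by omega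
        exact_mod_cast this
      have h3 := hs p
      have h4 : -((Fintype.card P : ℤ) * W) ≤ -(((S.toList.take j).length : ℤ) * W) := by
        have : (0:ℤ) ≤ W := by positivity
        nlinarith
      linarith
    · -- inductive step : peel one element
      obtain ⟨i, hiS, hf'⟩ := peel x (by omega) hf
      have hcard' : (S.erase i).card = c - 1 := by
        rw [Finset.card_erase_of_mem hiS, hcard]
      obtain ⟨L', hnd', hmem', hpre'⟩ := ih (c-1) (by omega) (S.erase i) hcard'
        (by omega) hf'
      have hiL' : i ∉ L' := fun h => (Finset.notMem_erase i S) ((hmem' i).mp h)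
      refine ⟨L' ++ [i], ?_, fun i' => ?_, fun j p => ?_⟩
      · simp [List.nodup_append, hnd', hiL']
        intro a ha hai; exact hiL' (hai ▸ ha)
      · simp only [List.mem_append, List.mem_singleton, hmem', Finset.mem_erase]
        constructor
        · rintro (⟨_, h⟩ | h)
          · exact h
          · exact h ▸ hiS
        · intro h
          by_cases hii : i' = i
          · exact Or.inr hii
          · exact Or.inl ⟨hii, h⟩
      · rcases le_or_gt j L'.length with hj | hj
        · rw [List.take_append_of_le_length hj]
          exact hpre' j p
        · have hfull : (L' ++ [i]).take j = L' ++ [i] := by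
            apply List.take_of_length_le
            simp
            omega
          rw [hfull]
          have hsum_eq : ((L' ++ [i]).map fun i' => x i' p).sum = ∑ i' ∈ S, x i' p := by
            have hperm : (L' ++ [i]).toFinset = S := by
              ext i'
              rw [List.mem_toFinset]
              simp only [List.mem_append, List.mem_singleton, hmem', Finset.mem_erase]
              constructor
              · rintro (⟨_, h⟩ | h)
                · exact h
                · exact h ▸ hiS
              · intro h
                by_cases hii : i' = i
                · exact Or.inr hii
                · exact Or.inl ⟨hii, h⟩
            have hnd : (L' ++ [i]).Nodup := by
              simp [List.nodup_append, hnd', hiL']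
              intro a ha hai; exact hiL' (hai ▸ ha)
            rw [← hperm, List.sum_toFinset _ hnd]
          rw [hsum_eq]
          exact full_sum_lb x s W hx hs hse hf p

end Steinitz

namespace WorkflowNet

variable {P T : Type} [DecidableEq P]

lemma list_sum_get {α : Type} (l : List α) (f : α → ℤ) :
    ∑ i : Fin l.length, f (l.get i) = (l.map f).sum := by
  induction l with
  | nil => simp
  | cons a l ih =>
      simp only [List.length_cons, List.map_cons, List.sum_cons]
      rw [Fin.sum_univ_succ]
      simp only [List.get_eq_getElem, Fin.val_succ, List.getElem_cons_succ, Fin.val_zero,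
        List.getElem_cons_zero]
      simp only [List.get_eq_getElem] at ih
      rw [ih]

lemma key [Fintype P] [Fintype T] (N : WorkflowNet P T) (hN : N.Nonredundant)
    (k : ℕ) (m : P → ℕ)
    (h : N.toPetriNet.ZReach (fun p => (N.iniM k p : ℤ)) (fun p => (m p : ℤ))) :
    ∃ l, l ≤ (N.toPetriNet.maxW + 2) ^ (Fintype.card T) *
          max N.toPetriNet.maxW k * (Fintype.card P * (Fintype.card P + 2)) ∧
    ∃ m', N.toPetriNet.Reach (N.iniM l) m' ∧
      N.toPetriNet.Reach (fun p => N.iniM k p + m' p) (fun p => m p + m' p) := by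
  classical
  obtain ⟨ts, hts⟩ := PetriNet.zreach_list h
  set W := N.toPetriNet.maxW with hW
  set d := Fintype.card P with hd
  set c := max W k * (d + 2) with hc
  have hdpos : 1 ≤ d := by
    rw [hd]
    exact Fintype.card_pos_iff.mpr ⟨N.ini⟩
  have hWc : W ≤ c := by
    have h1 : W ≤ max W k := le_max_left _ _
    calc W = W * 1 := by omega
      _ ≤ max W k * (d+2) := Nat.mul_le_mul h1 (by omega)
  obtain ⟨l, hl, m', hrm', hm'⟩ := N.cover hN c hWc
  refine ⟨l, ?_, m', hrm', ?_⟩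
  · calc l ≤ c * (W+2)^(Fintype.card T) := hl
      _ = (W+2)^(Fintype.card T) * max W k * (d + 2) := by rw [hc]; ring
      _ ≤ (W+2)^(Fintype.card T) * max W k * (d * (d+2)) := by
          apply Nat.mul_le_mul_left
          calc d + 2 = 1 * (d + 2) := by omega
            _ ≤ d * (d + 2) := Nat.mul_le_mul_right _ hdpos
  · -- construct the reordered firing sequence
    set x : Fin ts.length → P → ℤ := fun i p => N.toPetriNet.eff (ts.get i) p with hx
    have hxs : ∀ p, ∑ i : Fin ts.length, x i p =
        (ts.map fun t => N.toPetriNet.eff t p).sum := by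
      intro p
      exact list_sum_get ts (fun t => N.toPetriNet.eff t p)
    have hxW : ∀ i p, |x i p| ≤ (W:ℤ) := fun i p => N.toPetriNet.abs_eff_le_maxW _ p
    set s : P → ℤ := fun p => (N.iniM k p : ℤ) with hsdef
    have hs0 : ∀ p, 0 ≤ s p := fun p => Int.natCast_nonneg _
    have hse : ∀ p, 0 ≤ s p + ∑ i : Fin ts.length, x i p := by
      intro p
      rw [hxs p, hsdef]
      dsimp only
      rw [← hts p]
      exact Int.natCast_nonneg _
    have hL : ∃ L : List (Fin ts.length), L.Nodup ∧ (∀ i, i ∈ L) ∧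
        ∀ j p, -((d:ℤ) * W) ≤ s p + ((L.take j).map fun i => x i p).sum := by
      rcases le_or_gt d ts.length with hdn | hdn
      · obtain ⟨L, h1, h2, h3⟩ := Steinitz.assemble x s W hxW hs0 hse ts.length
          Finset.univ (by simp) (by rw [← hd]; exact hdn) (Steinitz.feas_univ x (by rw [← hd]; exact hdn))
        exact ⟨L, h1, fun i => (h2 i).mpr (Finset.mem_univ i), h3⟩
      · refine ⟨List.finRange ts.length, List.nodup_finRange _, by simp, fun j p => ?_⟩
        have h1 := Steinitz.prefix_lb x W hxW ((List.finRange ts.length).take j) p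
        have h2 : (((List.finRange ts.length).take j).length : ℤ) ≤ (d:ℤ) := by
          have h3 : ((List.finRange ts.length).take j).length ≤ ts.length := by
            rw [List.length_take, List.length_finRange]
            omega
          exact_mod_cast le_trans h3 (le_of_lt hdn)
        have h4 := hs0 p
        have h5 : (0:ℤ) ≤ (W:ℤ) := Int.natCast_nonneg _
        nlinarith
    obtain ⟨L, hLnd, hLmem, hLpre⟩ := hL
    set ts' : List T := L.map ts.get with hts'
    have htake : ∀ j p, ((ts'.take j).map fun t => N.toPetriNet.eff t p) =
        ((L.take j).map fun i => x i p) := by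
      intro j p
      rw [hts', ← List.map_take, List.map_map]
      rfl
    obtain ⟨M1, hM1r, hM1⟩ := N.toPetriNet.fire_seq ts' (fun p => N.iniM k p + m' p) (by
      intro j hj p
      have hpre_le : (N.toPetriNet.pre (ts'.get ⟨j,hj⟩) p : ℤ) ≤ (W:ℤ) := by
        exact_mod_cast N.toPetriNet.pre_le_maxW _ p
      have h1 := hLpre j p
      rw [← htake j p] at h1
      have hmc : (c:ℤ) ≤ (m' p : ℤ) := by exact_mod_cast hm' p
      have hcW : ((W * (d + 2) : ℕ) : ℤ) ≤ (c:ℤ) := by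
        exact_mod_cast Nat.mul_le_mul_right _ (le_max_left W k)
      have hsplit : ((W * (d + 2) : ℕ) : ℤ) = (W:ℤ) * d + 2 * W := by push_cast; ring
      have hcast : ((N.iniM k p + m' p : ℕ) : ℤ) = s p + (m' p : ℤ) := by
        rw [hsdef]; push_cast; ring
      rw [hcast]
      nlinarith [Int.natCast_nonneg (m' p), Int.natCast_nonneg W])
    have hperm : L.Perm (List.finRange ts.length) := by
      rw [List.perm_ext_iff_of_nodup hLnd (List.nodup_finRange _)]
      intro a
      simp [hLmem a]
    have hsum' : ∀ p, (ts'.map fun t => N.toPetriNet.eff t p).sum =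
        (ts.map fun t => N.toPetriNet.eff t p).sum := by
      intro p
      rw [hts', List.map_map]
      have h2 := (hperm.map ((fun t => N.toPetriNet.eff t p) ∘ ts.get)).sum_eq
      rw [h2, ← List.map_map, List.map_get_finRange]
    have hfinal : ∀ p, M1 p = m p + m' p := by
      intro p
      have h1 := hM1 p
      rw [hsum' p] at h1
      have h2 := hts p
      have : (M1 p : ℤ) = ((m p + m' p : ℕ) : ℤ) := by push_cast; push_cast at h1 h2; linarith
      exact_mod_cast this
    exact PetriNet.reach_congr hM1r (fun p => rfl) hfinal

end WorkflowNet

namespace WorkflowNet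

variable {P T : Type} [DecidableEq P]

lemma key_sound (N : WorkflowNet P T) {k l : ℕ} {m m' : P → ℕ}
    (hKl : N.KSound l) (hKlk : N.KSound (l+k))
    (hm' : N.toPetriNet.Reach (N.iniM l) m')
    (hmm' : N.toPetriNet.Reach (fun p => N.iniM k p + m' p) (fun p => m p + m' p)) :
    N.toPetriNet.Reach m (N.finM k) := by
  have h1 : N.toPetriNet.Reach m' (N.finM l) := hKl m' hm'
  have h2 : N.toPetriNet.Reach (fun p => m p + m' p) (fun p => m p + N.finM l p) :=
    PetriNet.reach_congr (h1.addc m) (fun p => by omega) (fun p => by omega)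
  have h3 : N.toPetriNet.Reach (N.iniM (l+k)) (fun p => m p + m' p) := by
    have h4 := hm'.addc (N.iniM k)
    have h5 : N.toPetriNet.Reach (N.iniM (l+k)) (fun p => N.iniM k p + m' p) :=
      PetriNet.reach_congr h4
        (fun p => by rw [← N.iniM_add l k p])
        (fun p => by omega)
    exact h5.trans hmm'
  have h6 : N.toPetriNet.Reach (N.iniM (l+k)) (fun p => m p + N.finM l p) := h3.trans h2
  have h7 : N.toPetriNet.Reach (fun p => m p + N.finM l p) (N.finM (l+k)) := hKlk _ h6
  obtain ⟨b', hb', hr⟩ := N.reach_sub_fin m l h7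
  have hfk : ∀ p, b' p = N.finM k p := by
    intro p
    have h8 := hb' p
    by_cases hp : p = N.fin
    · simp only [WorkflowNet.finM, if_pos hp] at h8 ⊢
      omega
    · simp only [WorkflowNet.finM, if_neg hp] at h8 ⊢
      omega
  exact PetriNet.reach_congr hr (fun p => rfl) hfk

end WorkflowNet

/-- Generalised soundness coincides with strong `k`-soundness for all `k`;
moreover strong unsoundness at `k` yields unsoundness at some small `k'`. -/
theorem generalised_iff_strongly_sound {P T : Type} [DecidableEq P] [Fintype P]
    [Fintype T] (N : WorkflowNet P T) (hN : N.Nonredundant) :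
    (N.GeneralisedSound ↔ ∀ k : ℕ, N.StronglyKSound k) ∧
    ∀ k : ℕ, ¬ N.StronglyKSound k →
      ∃ k' : ℕ,
        k' ≤ k + (N.toPetriNet.maxW + 2) ^ (Fintype.card T) *
              max N.toPetriNet.maxW k * (Fintype.card P * (Fintype.card P + 2)) ∧
        ¬ N.KSound k' := by
  constructor
  · constructor
    · intro hG k m hz
      obtain ⟨l, _, m', hrm', hmm'⟩ := N.key hN k m hz
      have hrm2 : N.toPetriNet.Reach (N.iniM (l+1)) (fun p => m' p + N.iniM 1 p) :=
        PetriNet.reach_congr (hrm'.addc (N.iniM 1))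
          (fun p => by rw [← N.iniM_add l 1 p]) (fun p => rfl)
      have hmm2 : N.toPetriNet.Reach
          (fun p => N.iniM k p + (m' p + N.iniM 1 p))
          (fun p => m p + (m' p + N.iniM 1 p)) :=
        PetriNet.reach_congr (hmm'.addc (N.iniM 1)) (fun p => by omega) (fun p => by omega)
      exact N.key_sound (hG (l+1) (by omega)) (hG (l+1+k) (by omega)) hrm2 hmm2
    · intro hS k _ m hr
      exact hS k m (PetriNet.reach_zreach hr)
  · intro k hns
    unfold WorkflowNet.StronglyKSound at hns
    push_neg at hns
    obtain ⟨m, hz, hnr⟩ := hns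
    obtain ⟨l, hl, m', hrm', hmm'⟩ := N.key hN k m hz
    by_cases hKl : N.KSound l
    · by_cases hKlk : N.KSound (l+k)
      · exact absurd (N.key_sound hKl hKlk hrm' hmm') hnr
      · exact ⟨l+k, by omega, hKlk⟩
    · exact ⟨l, by omega, hKl⟩
end

section
/- Let N = (P,T,F) be a nonredundant workflow net. Suppose N is strongly i-sound for all 1 ≤ i < k but not strongly k-sound. If c is a constant such that every natural solution μ of ILP_N admits a natural solution ν ≤ μ with ν componentwise at most c and A·ν ≤ A·μ (A the matrix of ILP_N), then k ≤ c. -/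
section ILPN

variable {P T : Type} [DecidableEq P] [Fintype P] [Fintype T]

/-- `(κ, τ)` is a natural solution of ILP_N. -/
def IsSolILP (N : WorkflowNet P T) (κ : ℕ) (τ : T → ℕ) : Prop :=
  1 ≤ κ ∧
  0 ≤ (κ : ℤ) + ∑ t, (τ t : ℤ) * N.toPetriNet.eff t N.ini ∧
  ∀ p : P, p ≠ N.ini → 0 ≤ ∑ t, (τ t : ℤ) * N.toPetriNet.eff t p

namespace PetriNet

lemma fire_add (N : PetriNet P T) {a b : P → ℕ} {t : T} (h : N.Fire a t b) (d : P → ℕ) :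
    N.Fire (fun p => a p + d p) t (fun p => b p + d p) := by
  obtain ⟨he, hb⟩ := h
  refine ⟨fun p => le_trans (he p) (Nat.le_add_right _ _), fun p => ?_⟩
  have h1 := he p
  have h2 := hb p
  show b p + d p = (a p + d p) - N.pre t p + N.post t p
  omega

lemma reach_add (N : PetriNet P T) {a b : P → ℕ} (h : N.Reach a b) (d : P → ℕ) :
    N.Reach (fun p => a p + d p) (fun p => b p + d p) := by
  induction h with
  | refl => exact Relation.ReflTransGen.refl
  | tail _ hstep ih =>
    obtain ⟨t, hf⟩ := hstep
    exact ih.tail ⟨t, N.fire_add hf d⟩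

lemma zreach_counts (N : PetriNet P T) {x y : P → ℤ} (h : N.ZReach x y) :
    ∃ τ : T → ℕ, ∀ p, y p = x p + ∑ t, (τ t : ℤ) * N.eff t p := by
  classical
  induction h with
  | refl => exact ⟨0, by simp⟩
  | tail _ hstep ih =>
    obtain ⟨τ, hτ⟩ := ih
    obtain ⟨t0, ht0⟩ := hstep
    refine ⟨fun t => τ t + if t = t0 then 1 else 0, fun p => ?_⟩
    rw [ht0 p, hτ p]
    have hs : ∑ t, (((fun t => τ t + if t = t0 then 1 else 0) t : ℕ) : ℤ) * N.eff t p
        = ∑ t, (τ t : ℤ) * N.eff t p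
          + ∑ t, (if t = t0 then (1 : ℤ) else 0) * N.eff t p := by
      rw [← Finset.sum_add_distrib]
      refine Finset.sum_congr rfl fun t _ => ?_
      push_cast
      ring
    rw [hs]
    have : ∑ t, (if t = t0 then (1 : ℤ) else 0) * N.eff t p = N.eff t0 p := by
      rw [Finset.sum_eq_single t0] <;> simp +contextual
    rw [this]
    ring

lemma zreach_realize (N : PetriNet P T) :
    ∀ (n : ℕ) (τ : T → ℕ), (∑ t, τ t) = n →
    ∀ x : P → ℤ, N.ZReach x (fun p => x p + ∑ t, (τ t : ℤ) * N.eff t p) := by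
  classical
  intro n
  induction n with
  | zero =>
    intro τ hτ x
    have hz : ∀ t, τ t = 0 := fun t =>
      Finset.sum_eq_zero_iff.mp hτ t (Finset.mem_univ t)
    have : (fun p => x p + ∑ t, (τ t : ℤ) * N.eff t p) = x := by
      funext p; simp [hz]
    rw [this]
    exact Relation.ReflTransGen.refl
  | succ n ih =>
    intro τ hτ x
    have hex : ∃ t0, τ t0 ≠ 0 := by
      by_contra h
      push_neg at h
      simp [h] at hτ
    obtain ⟨t0, ht0⟩ := hex
    set τ' : T → ℕ := fun t => τ t - if t = t0 then 1 else 0 with hτ'def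
    have key : ∀ t, τ t = τ' t + (if t = t0 then 1 else 0) := by
      intro t
      by_cases h : t = t0 <;> simp [hτ'def, h] <;> omega
    have hsum' : ∑ t, τ' t = n := by
      have hE : ∑ t, τ t = ∑ t, τ' t + ∑ t, (if t = t0 then 1 else 0) := by
        rw [← Finset.sum_add_distrib]; exact Finset.sum_congr rfl fun t _ => key t
      have h1 : ∑ t, (if t = t0 then 1 else 0) = 1 := by
        rw [Finset.sum_eq_single t0] <;> simp +contextual
      omega
    have hstep : N.ZStep x (fun p => x p + N.eff t0 p) := ⟨t0, fun p => rfl⟩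
    have htail := ih τ' hsum' (fun p => x p + N.eff t0 p)
    have heq : (fun p => (x p + N.eff t0 p) + ∑ t, (τ' t : ℤ) * N.eff t p)
        = (fun p => x p + ∑ t, (τ t : ℤ) * N.eff t p) := by
      funext p
      have hE : ∑ t, (τ t : ℤ) * N.eff t p
          = ∑ t, (τ' t : ℤ) * N.eff t p
            + ∑ t, (if t = t0 then (1 : ℤ) else 0) * N.eff t p := by
        rw [← Finset.sum_add_distrib]
        refine Finset.sum_congr rfl fun t _ => ?_
        rw [key t]
        push_cast
        by_cases h : t = t0 <;> simp [h] <;> ring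
      have h1 : ∑ t, (if t = t0 then (1 : ℤ) else 0) * N.eff t p = N.eff t0 p := by
        rw [Finset.sum_eq_single t0] <;> simp +contextual
      rw [hE, h1]
      ring
    rw [heq] at htail
    exact Relation.ReflTransGen.head hstep htail

end PetriNet

/-- The first strongly unsound number is bounded by the small-solution bound of
ILP_N. -/
theorem first_unsound_small (N : WorkflowNet P T) (hN : N.Nonredundant)
    (k : ℕ) (hbelow : ∀ i : ℕ, 1 ≤ i → i < k → N.StronglyKSound i)
    (hk : ¬ N.StronglyKSound k) (c : ℕ)
    (hc : ∀ (κ : ℕ) (τ : T → ℕ), IsSolILP N κ τ →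
      ∃ (κ' : ℕ) (τ' : T → ℕ), IsSolILP N κ' τ' ∧
        κ' ≤ κ ∧ (∀ t, τ' t ≤ τ t) ∧ κ' ≤ c ∧ (∀ t, τ' t ≤ c) ∧
        ((κ' : ℤ) + ∑ t, (τ' t : ℤ) * N.toPetriNet.eff t N.ini ≤
          (κ : ℤ) + ∑ t, (τ t : ℤ) * N.toPetriNet.eff t N.ini) ∧
        ∀ p : P, p ≠ N.ini →
          ∑ t, (τ' t : ℤ) * N.toPetriNet.eff t p ≤
            ∑ t, (τ t : ℤ) * N.toPetriNet.eff t p) :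
    k ≤ c := by
  classical
  by_contra hck
  push_neg at hck
  have hk1 : 1 ≤ k := by omega
  simp only [WorkflowNet.StronglyKSound] at hk
  push_neg at hk
  obtain ⟨m, hzm, hnm⟩ := hk
  obtain ⟨τ, hτ⟩ := N.toPetriNet.zreach_counts hzm
  have hsol : IsSolILP N k τ := by
    refine ⟨hk1, ?_, ?_⟩
    · have h := hτ N.ini
      simp [WorkflowNet.iniM] at h
      rw [← h]
      exact Int.natCast_nonneg _
    · intro p hp
      have h := hτ p
      simp [WorkflowNet.iniM, hp] at h
      rw [← h]
      exact Int.natCast_nonneg _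
  obtain ⟨κ', τ', hsol', hκk, hle, hκc, hτc, hini_le, hp_le⟩ := hc k τ hsol
  have hκ1 : 1 ≤ κ' := hsol'.1
  have hκlt : κ' < k := lt_of_le_of_lt hκc hck
  set κ'' : ℕ := k - κ' with hκ''def
  set τ'' : T → ℕ := fun t => τ t - τ' t with hτ''def
  have hτ''cast : ∀ p, ∑ t, (τ'' t : ℤ) * N.toPetriNet.eff t p
      = ∑ t, (τ t : ℤ) * N.toPetriNet.eff t p
        - ∑ t, (τ' t : ℤ) * N.toPetriNet.eff t p := by
    intro p
    rw [← Finset.sum_sub_distrib]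
    refine Finset.sum_congr rfl fun t _ => ?_
    rw [hτ''def]
    rw [Nat.cast_sub (hle t)]
    ring
  -- first piece
  set S1 : P → ℤ := fun p => ((N.iniM κ') p : ℤ) + ∑ t, (τ' t : ℤ) * N.toPetriNet.eff t p
    with hS1def
  have hS1 : ∀ p, 0 ≤ S1 p := by
    intro p
    show 0 ≤ ((N.iniM κ') p : ℤ) + ∑ t, (τ' t : ℤ) * N.toPetriNet.eff t p
    by_cases hp : p = N.ini
    · subst hp
      have h1 : ((N.iniM κ') N.ini : ℤ) = (κ' : ℤ) := by simp [WorkflowNet.iniM]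
      rw [h1]; exact hsol'.2.1
    · have h1 : ((N.iniM κ') p : ℤ) = 0 := by simp [WorkflowNet.iniM, hp]
      rw [h1]; simpa using hsol'.2.2 p hp
  set m1 : P → ℕ := fun p => (S1 p).toNat with hm1def
  have hm1 : ∀ p, (m1 p : ℤ) = S1 p := fun p => Int.toNat_of_nonneg (hS1 p)
  have hz1 : N.toPetriNet.ZReach (fun p => ((N.iniM κ') p : ℤ)) (fun p => (m1 p : ℤ)) := by
    have h := N.toPetriNet.zreach_realize (∑ t, τ' t) τ' rfl
      (fun p => ((N.iniM κ') p : ℤ))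
    have he : (fun p => (m1 p : ℤ))
        = (fun p => ((N.iniM κ') p : ℤ) + ∑ t, (τ' t : ℤ) * N.toPetriNet.eff t p) := by
      funext p; rw [hm1 p]
    rw [he]
    exact h
  have hr1 : N.toPetriNet.Reach m1 (N.finM κ') := hbelow κ' hκ1 hκlt m1 hz1
  -- second piece
  set S2 : P → ℤ := fun p => ((N.iniM κ'') p : ℤ) + ∑ t, (τ'' t : ℤ) * N.toPetriNet.eff t p
    with hS2def
  have hκ''cast : (κ'' : ℤ) = (k : ℤ) - (κ' : ℤ) := by
    rw [hκ''def, Nat.cast_sub (le_of_lt hκlt)]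
  have hS2 : ∀ p, 0 ≤ S2 p := by
    intro p
    show 0 ≤ ((N.iniM κ'') p : ℤ) + ∑ t, (τ'' t : ℤ) * N.toPetriNet.eff t p
    rw [hτ''cast]
    by_cases hp : p = N.ini
    · subst hp
      have h1 : ((N.iniM κ'') N.ini : ℤ) = (κ'' : ℤ) := by simp [WorkflowNet.iniM]
      rw [h1, hκ''cast]
      linarith [hini_le]
    · have h1 : ((N.iniM κ'') p : ℤ) = 0 := by simp [WorkflowNet.iniM, hp]
      rw [h1]
      linarith [hp_le p hp]
  set m2 : P → ℕ := fun p => (S2 p).toNat with hm2def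
  have hm2 : ∀ p, (m2 p : ℤ) = S2 p := fun p => Int.toNat_of_nonneg (hS2 p)
  have hz2 : N.toPetriNet.ZReach (fun p => ((N.iniM κ'') p : ℤ)) (fun p => (m2 p : ℤ)) := by
    have h := N.toPetriNet.zreach_realize (∑ t, τ'' t) τ'' rfl
      (fun p => ((N.iniM κ'') p : ℤ))
    have he : (fun p => (m2 p : ℤ))
        = (fun p => ((N.iniM κ'') p : ℤ) + ∑ t, (τ'' t : ℤ) * N.toPetriNet.eff t p) := by
      funext p; rw [hm2 p]
    rw [he]
    exact h
  have hκ''1 : 1 ≤ κ'' := by omega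
  have hκ''lt : κ'' < k := by omega
  have hr2 : N.toPetriNet.Reach m2 (N.finM κ'') := hbelow κ'' hκ''1 hκ''lt m2 hz2
  -- split m = m1 + m2
  have hmsplit : ∀ p, m p = m1 p + m2 p := by
    intro p
    have hZ : (m p : ℤ) = (m1 p : ℤ) + (m2 p : ℤ) := by
      rw [hm1 p, hm2 p, hτ p]
      have hini : ((N.iniM k) p : ℤ) = ((N.iniM κ') p : ℤ) + ((N.iniM κ'') p : ℤ) := by
        simp only [WorkflowNet.iniM]
        by_cases hp : p = N.ini <;> simp [hp] <;> omega
      show ((N.iniM k) p : ℤ) + ∑ t, (τ t : ℤ) * N.toPetriNet.eff t p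
          = (((N.iniM κ') p : ℤ) + ∑ t, (τ' t : ℤ) * N.toPetriNet.eff t p)
          + (((N.iniM κ'') p : ℤ) + ∑ t, (τ'' t : ℤ) * N.toPetriNet.eff t p)
      rw [hini, hτ''cast]
      ring
    exact_mod_cast hZ
  -- chain the reaches
  apply hnm
  have step1 : N.toPetriNet.Reach m (fun p => N.finM κ' p + m2 p) := by
    have h := N.toPetriNet.reach_add hr1 m2
    have he : (fun p => m1 p + m2 p) = m := by
      funext p; exact (hmsplit p).symm
    rwa [he] at h
  have step2 : N.toPetriNet.Reach (fun p => N.finM κ' p + m2 p)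
      (fun p => N.finM κ' p + N.finM κ'' p) := by
    have h := N.toPetriNet.reach_add hr2 (N.finM κ')
    have he1 : (fun p => m2 p + N.finM κ' p) = (fun p => N.finM κ' p + m2 p) := by
      funext p; omega
    have he2 : (fun p => N.finM κ'' p + N.finM κ' p)
        = (fun p => N.finM κ' p + N.finM κ'' p) := by
      funext p; omega
    rwa [he1, he2] at h
  have hfin : (fun p => N.finM κ' p + N.finM κ'' p) = N.finM k := by
    funext p
    simp only [WorkflowNet.finM]
    by_cases hp : p = N.fin <;> simp [hp] <;> omega
  exact step1.trans (hfin ▸ step2)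

end ILPN
end

section
/- Let N be a workflow net with initial place i and final place f, and let N' be N extended with one new transition t with pre(t) = {i:2} and post(t) = {f:1}. Then N' is not k-sound for any k ≥ 2. Consequently, N' is structurally sound if and only if N is 1-sound. -/
section Helpers

variable {P T : Type}

/-- Reachability is preserved under adding tokens. -/
lemma reach_add {N : PetriNet P T} {m1 m1' : P → ℕ} (h : N.Reach m1 m1') (m2 : P → ℕ) :
    N.Reach (fun p => m1 p + m2 p) (fun p => m1' p + m2 p) := by
  induction h with
  | refl => exact Relation.ReflTransGen.refl
  | tail hab hstep ih =>
    refine ih.tail ?_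
    obtain ⟨t, hen, heq⟩ := hstep
    refine ⟨t, fun p => le_trans (hen p) (Nat.le_add_right _ _), fun p => ?_⟩
    have h1 := hen p
    have h2 := heq p
    dsimp only
    omega

/-- If no transition consumes from `f`, tokens in `f` never decrease. -/
lemma reach_mono_fin {N : PetriNet P T} {f : P} (hf : ∀ t, N.pre t f = 0)
    {m m' : P → ℕ} (h : N.Reach m m') : m f ≤ m' f := by
  induction h with
  | refl => exact le_refl _
  | tail hab hstep ih =>
    obtain ⟨t, hen, heq⟩ := hstep
    rw [heq f, hf t]
    omega

/-- If no transition consumes from `f`, we may remove `c` tokens from `f`. -/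
lemma reach_sub_fin [DecidableEq P] {N : PetriNet P T} {f : P} (hf : ∀ t, N.pre t f = 0)
    {m m' : P → ℕ} (c : ℕ) (hc : c ≤ m f) (h : N.Reach m m') :
    N.Reach (fun p => if p = f then m p - c else m p)
      (fun p => if p = f then m' p - c else m' p) := by
  induction h with
  | refl => exact Relation.ReflTransGen.refl
  | tail hab hstep ih =>
    refine ih.tail ?_
    obtain ⟨t, hen, heq⟩ := hstep
    have hbf : c ≤ _ := le_trans hc (reach_mono_fin hf hab)
    refine ⟨t, fun p => ?_, fun p => ?_⟩
    · dsimp only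
      by_cases hp : p = f
      · rw [if_pos hp, hp, hf t]; exact Nat.zero_le _
      · rw [if_neg hp]; exact hen p
    · dsimp only
      by_cases hp : p = f
      · rw [if_pos hp, if_pos hp, hp, heq f, hf t]
        omega
      · rw [if_neg hp, if_neg hp]; exact heq p

/-- From a dead marking, only the marking itself is reachable. -/
lemma reach_dead {N : PetriNet P T} {m : P → ℕ}
    (hdead : ∀ t, ¬ N.Enabled m t) {m' : P → ℕ} (h : N.Reach m m') : m' = m := by
  induction h with
  | refl => rfl
  | tail hab hstep ih =>
    obtain ⟨t, hen, _⟩ := hstep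
    rw [ih] at hen
    exact absurd hen (hdead t)

/-- Every transition of a workflow net consumes from some place other than `fin`. -/
lemma WorkflowNet.exists_pre_pos (W : WorkflowNet P T) (t : T) :
    ∃ p, p ≠ W.fin ∧ 0 < W.pre t p := by
  have h := (W.on_path (Sum.inr t)).1
  rcases h.cases_tail with h' | ⟨v, _, he⟩
  · exact absurd h' (by simp)
  · cases v with
    | inl p =>
      have hpos : 0 < W.pre t p := he
      refine ⟨p, fun hp => ?_, hpos⟩
      rw [hp, W.no_cons_fin] at hpos
      exact lt_irrefl 0 hpos
    | inr t' => exact he.elim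

/-- The marking `{fin : c}` is dead in a workflow net. -/
lemma WorkflowNet.finM_dead [DecidableEq P] (W : WorkflowNet P T) (c : ℕ) (t : T) :
    ¬ W.toPetriNet.Enabled (W.finM c) t := by
  intro hen
  obtain ⟨p, hpf, hpos⟩ := W.exists_pre_pos t
  have := hen p
  simp only [WorkflowNet.finM, if_neg hpf] at this
  omega

/-- Scaling a run from `{i:a}` to `{f:b}`. -/
lemma reach_scale [DecidableEq P] {N : PetriNet P T} {i f : P} {a b : ℕ}
    (h : N.Reach (fun p => if p = i then a else 0) (fun p => if p = f then b else 0)) :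
    ∀ j, N.Reach (fun p => if p = i then j * a else 0)
      (fun p => if p = f then j * b else 0) := by
  intro j
  induction j with
  | zero =>
    have e : (fun p => if p = i then 0 * a else 0) = (fun p => if p = f then 0 * b else 0) := by
      funext p; split_ifs <;> omega
    rw [e]
    exact Relation.ReflTransGen.refl
  | succ j ih =>
    have h1 := reach_add ih (fun p => if p = i then a else 0)
    have h2 := reach_add h (fun p => if p = f then j * b else 0)
    have e1 : (fun p => (if p = i then j * a else 0) + (if p = i then a else 0))
        = (fun p => if p = i then (j + 1) * a else 0) := by
      funext p; split_ifs <;> ring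
    have e2 : (fun p => (if p = f then j * b else 0) + (if p = i then a else 0))
        = (fun p => (if p = i then a else 0) + (if p = f then j * b else 0)) := by
      funext p; split_ifs <;> omega
    have e3 : (fun p => (if p = f then b else 0) + (if p = f then j * b else 0))
        = (fun p => if p = f then (j + 1) * b else 0) := by
      funext p; split_ifs <;> ring
    rw [e1, e2] at h1
    rw [e3] at h2
    exact h1.trans h2

end Helpers

/-- Adding a transition consuming `{i:2}` and producing `{f:1}` makes the net
unsound for all `k ≥ 2`; hence the extended net is structurally sound iff the
original net is 1-sound. -/
theorem structural_hardness_gadget {P T : Type} [DecidableEq P]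
    (N : WorkflowNet P T) (N' : WorkflowNet P (T ⊕ Unit))
    (hini : N'.ini = N.ini) (hfin : N'.fin = N.fin)
    (hpre : ∀ t p, N'.pre (Sum.inl t) p = N.pre t p)
    (hpost : ∀ t p, N'.post (Sum.inl t) p = N.post t p)
    (hpre' : ∀ p, N'.pre (Sum.inr ()) p = N.iniM 2 p)
    (hpost' : ∀ p, N'.post (Sum.inr ()) p = N.finM 1 p) :
    (∀ k : ℕ, 2 ≤ k → ¬ N'.KSound k) ∧
    (N'.StructurallySound ↔ N.KSound 1) := by
  classical
  have hne' : N'.fin ≠ N'.ini := Ne.symm N'.ini_ne_fin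
  have hf0 : ∀ t, N'.pre t N'.fin = 0 := N'.no_cons_fin
  -- firing the gadget transition once: {i:2} → {f:1} in N'
  have hF : N'.toPetriNet.Reach (fun p => if p = N'.ini then 2 else 0)
      (fun p => if p = N'.fin then 1 else 0) := by
    refine Relation.ReflTransGen.single ⟨Sum.inr (), fun p => ?_, fun p => ?_⟩
    · rw [hpre' p]
      simp only [WorkflowNet.iniM, hini]
      exact le_refl _
    · rw [hpre' p, hpost' p]
      simp only [WorkflowNet.iniM, WorkflowNet.finM, hini, hfin]
      split_ifs <;> omega
  have hdead : ∀ (c : ℕ) (m' : P → ℕ), N'.toPetriNet.Reach (N'.finM c) m' → m' = N'.finM c :=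
    fun c m' h => reach_dead (fun t => N'.finM_dead c t) h
  have part1 : ∀ k : ℕ, 2 ≤ k → ¬ N'.KSound k := by
    intro k hk hsound
    rcases Nat.even_or_odd k with ⟨j, hj⟩ | ⟨j, hj⟩
    · -- k = j + j
      have hj1 : 1 ≤ j := by omega
      have h1 := reach_scale hF j
      have e1 : N'.iniM k = (fun p => if p = N'.ini then j * 2 else 0) := by
        funext p; simp only [WorkflowNet.iniM]; split_ifs <;> omega
      have e2 : (fun p => if p = N'.fin then j * 1 else 0) = N'.finM j := by
        funext p; simp only [WorkflowNet.finM]; split_ifs <;> omega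
      rw [← e1, e2] at h1
      have h3 := hdead j _ (hsound _ h1)
      have h4 := congrFun h3 N'.fin
      simp [WorkflowNet.finM] at h4
      omega
    · -- k = 2 * j + 1
      have hj1 : 1 ≤ j := by omega
      have h1 := reach_add (reach_scale hF j) (fun p => if p = N'.ini then 1 else 0)
      have e1 : N'.iniM k =
          (fun p => (if p = N'.ini then j * 2 else 0) + (if p = N'.ini then 1 else 0)) := by
        funext p; simp only [WorkflowNet.iniM]; split_ifs <;> omega
      rw [← e1] at h1
      have h2 := hsound _ h1
      have hm1f : j ≤ ((fun p => (if p = N'.fin then j * 1 else 0) +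
          (if p = N'.ini then 1 else 0)) N'.fin) := by
        simp [hne']
      have h3 := reach_sub_fin hf0 j hm1f h2
      have e2 : (fun p => if p = N'.fin then
            ((fun p => (if p = N'.fin then j * 1 else 0) + (if p = N'.ini then 1 else 0)) p - j)
          else ((fun p => (if p = N'.fin then j * 1 else 0) + (if p = N'.ini then 1 else 0)) p))
          = (fun p => if p = N'.ini then 1 else 0) := by
        funext p
        by_cases hp : p = N'.fin
        · have hpi : p ≠ N'.ini := by rw [hp]; exact hne'
          simp only [if_pos hp, if_neg hpi]
          omega
        · simp only [if_neg hp, zero_add]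
      have e3 : (fun p => if p = N'.fin then (N'.finM k p - j) else N'.finM k p)
          = (fun p => if p = N'.fin then j + 1 else 0) := by
        funext p
        simp only [WorkflowNet.finM]
        split_ifs <;> omega
      rw [e2, e3] at h3
      have h4 := reach_scale h3 k
      have e4 : (fun p => if p = N'.ini then k * 1 else 0) = N'.iniM k := by
        funext p; simp only [WorkflowNet.iniM]; split_ifs <;> omega
      have e5 : (fun p => if p = N'.fin then k * (j + 1) else 0) = N'.finM (k * (j + 1)) := by
        funext p; simp only [WorkflowNet.finM]
      rw [e4, e5] at h4
      have h5 := hdead (k * (j + 1)) _ (hsound _ h4)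
      have h6 := congrFun h5 N'.fin
      simp [WorkflowNet.finM] at h6
      have hmul : k * (j + 1) = k * j + k := by ring
      have hkj : 2 * 1 ≤ k * j := Nat.mul_le_mul hk hj1
      omega
  -- transfer lemmas between N and N'
  have up : ∀ m m' : P → ℕ, N.toPetriNet.Reach m m' → N'.toPetriNet.Reach m m' := by
    intro m m' h
    induction h with
    | refl => exact Relation.ReflTransGen.refl
    | tail hab hstep ih =>
      obtain ⟨t, hen, heq⟩ := hstep
      refine ih.tail ⟨Sum.inl t, fun p => ?_, fun p => ?_⟩
      · rw [hpre t p]; exact hen p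
      · rw [heq p, hpre t p, hpost t p]
  have hpostini : ∀ t : T ⊕ Unit, N'.post t N.ini = 0 := by
    intro t
    have h := N'.no_prod_ini t
    rwa [hini] at h
  have down : ∀ m m' : P → ℕ, N'.toPetriNet.Reach m m' → m N.ini ≤ 1 →
      N.toPetriNet.Reach m m' ∧ m' N.ini ≤ 1 := by
    intro m m' h
    induction h with
    | refl => exact fun h1 => ⟨Relation.ReflTransGen.refl, h1⟩
    | tail hab hstep ih =>
      intro h1
      obtain ⟨hr, hb⟩ := ih h1
      obtain ⟨t, hen, heq⟩ := hstep
      cases t with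
      | inr u =>
        cases u
        exfalso
        have h2 := hen N.ini
        rw [hpre' N.ini] at h2
        simp [WorkflowNet.iniM] at h2
        omega
      | inl t0 =>
        refine ⟨hr.tail ⟨t0, fun p => ?_, fun p => ?_⟩, ?_⟩
        · rw [← hpre t0 p]; exact hen p
        · rw [heq p, hpre t0 p, hpost t0 p]
        · rw [heq N.ini, hpostini (Sum.inl t0)]
          omega
  have eini : N'.iniM 1 = N.iniM 1 := by
    funext p; simp only [WorkflowNet.iniM, hini]
  have efin : N'.finM 1 = N.finM 1 := by
    funext p; simp only [WorkflowNet.finM, hfin]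
  have hini1 : (N.iniM 1) N.ini ≤ 1 := by
    simp only [WorkflowNet.iniM]; split_ifs <;> omega
  refine ⟨part1, ?_, ?_⟩
  · rintro ⟨k, hk1, hks⟩
    have hk : k = 1 := by
      by_contra hne
      exact part1 k (by omega) hks
    subst hk
    intro m hm
    have h1 := up _ _ hm
    rw [← eini] at h1
    have h3 := down _ _ h1 (by rw [eini]; exact hini1)
    have h2 := hks m h1
    have h4 := (down _ _ h2 h3.2).1
    rwa [efin] at h4
  · intro h1
    refine ⟨1, le_refl 1, ?_⟩
    intro m hm
    rw [eini] at hm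
    have h3 := down _ _ hm hini1
    have h5 := up _ _ (h1 m h3.1)
    rwa [efin]
end
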